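/- Let Q be a medial quandle and e ∈ Q. Then the left translation L_e restricts to a group automorphism of the orbit group Ô(Q,e), and for all a,b in the orbit Qe one has a·b = (a − L_e(a)) + L_e(b), computed in Ô(Q,e). In other words, the orbit Qe, as a subquandle of Q, equals the affine quandle Aff(Ô(Q,e), L_e). -/

import Mathlib

/-- The set of left translations of a binary algebra `(Q, op)`, viewed as permutations:
permutations `f` such that `f x = op a x` for some `a`. -/
def translations {Q : Type*} (op : Q → Q → Q) : Set (Equiv.Perm Q) :=
  { f | ∃ a : Q, ∀ x : Q, f x = op a x }

/-- The (left) multiplication group `LMlt(Q)`: the subgroup of the symmetric group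
generated by the left translations. -/
def LMlt {Q : Type*} (op : Q → Q → Q) : Subgroup (Equiv.Perm Q) :=
  Subgroup.closure (translations op)

/-- The displacement group `Dis(Q)`: the subgroup generated by all `L_a * L_b⁻¹`. -/
def Dis {Q : Type*} (op : Q → Q → Q) : Subgroup (Equiv.Perm Q) :=
  Subgroup.closure { f | ∃ g ∈ translations op, ∃ h ∈ translations op, f = g * h⁻¹ }

/-- `(Q, op)` is a quandle: idempotent, left distributive, left quasigroup. -/
def IsQuandle {Q : Type*} (op : Q → Q → Q) : Prop :=
  (∀ x, op x x = x) ∧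
  (∀ x y z, op x (op y z) = op (op x y) (op x z)) ∧
  (∀ x y, ∃! u, op x u = y)

/-- `(Q, op)` is medial. -/
def IsMedial {Q : Type*} (op : Q → Q → Q) : Prop :=
  ∀ x y u v, op (op x y) (op u v) = op (op x u) (op y v)

/-- The orbit of `e` under the multiplication group. -/
def qOrbit {Q : Type*} (op : Q → Q → Q) (e : Q) : Set Q :=
  { y | ∃ f ∈ LMlt op, f e = y }

/-- The orbit of `e` under the displacement group. -/
def disOrbit {Q : Type*} (op : Q → Q → Q) (e : Q) : Set Q :=
  { y | ∃ f ∈ Dis op, f e = y }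


theorem Equiv.Perm.apply_inv_self {α : Type*} (f : Equiv.Perm α) (x : α) : f (f⁻¹ x) = x :=
  f.apply_symm_apply x

theorem Equiv.Perm.inv_apply_self {α : Type*} (f : Equiv.Perm α) (x : α) : f⁻¹ (f x) = x :=
  f.symm_apply_apply x

namespace OrbitAffine

variable {Q : Type*} {op : Q → Q → Q}

/-- Left translation as a permutation. -/
noncomputable def Ltr (hQ : IsQuandle op) (a : Q) : Equiv.Perm Q :=
  Equiv.ofBijective (op a)
    ⟨fun x y hxy => by
      obtain ⟨u, _, huniq⟩ := hQ.2.2 a (op a y)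
      exact (huniq x hxy).trans (huniq y rfl).symm,
     fun y => by obtain ⟨u, hu, -⟩ := hQ.2.2 a y; exact ⟨u, hu⟩⟩

@[simp] lemma Ltr_apply (hQ : IsQuandle op) (a x : Q) : Ltr hQ a x = op a x := rfl

lemma Ltr_mem_translations (hQ : IsQuandle op) (a : Q) : Ltr hQ a ∈ translations op :=
  ⟨a, fun _ => rfl⟩

lemma eq_Ltr_of_mem {hQ : IsQuandle op} {f : Equiv.Perm Q} (hf : f ∈ translations op) :
    ∃ a, f = Ltr hQ a := by
  obtain ⟨a, ha⟩ := hf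
  exact ⟨a, Equiv.ext fun x => ha x⟩

lemma Ltr_op (hQ : IsQuandle op) (a b : Q) :
    Ltr hQ (op a b) = Ltr hQ a * Ltr hQ b * (Ltr hQ a)⁻¹ := by
  ext x
  simp only [Equiv.Perm.mul_apply, Ltr_apply]
  conv_lhs => rw [show x = Ltr hQ a ((Ltr hQ a)⁻¹ x) from (Equiv.Perm.apply_inv_self _ _).symm]
  rw [Ltr_apply, ← hQ.2.1]

lemma medial_rel (hQ : IsQuandle op) (hM : IsMedial op) (x y u : Q) :
    Ltr hQ y * (Ltr hQ x)⁻¹ * Ltr hQ u = Ltr hQ u * (Ltr hQ x)⁻¹ * Ltr hQ y := by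
  have h1 : Ltr hQ (op x y) * Ltr hQ u = Ltr hQ (op x u) * Ltr hQ y := by
    ext v
    simp only [Equiv.Perm.mul_apply, Ltr_apply]
    exact hM x y u v
  rw [Ltr_op, Ltr_op] at h1
  have h2 := congrArg (fun g => (Ltr hQ x)⁻¹ * g) h1
  simpa [mul_assoc] using h2

lemma mem_dis_gen (hQ : IsQuandle op) (a b : Q) :
    Ltr hQ a * (Ltr hQ b)⁻¹ ∈ Dis op :=
  Subgroup.subset_closure ⟨Ltr hQ a, Ltr_mem_translations hQ a, Ltr hQ b,
    Ltr_mem_translations hQ b, rfl⟩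

lemma base_comm (hQ : IsQuandle op) (hM : IsMedial op) (e a b : Q) :
    Commute (Ltr hQ a * (Ltr hQ e)⁻¹) (Ltr hQ b * (Ltr hQ e)⁻¹) := by
  have h := medial_rel hQ hM e a b
  show _ = _
  simp only [← mul_assoc]
  rw [h]

lemma gen_decomp (hQ : IsQuandle op) (e a b : Q) :
    Ltr hQ a * (Ltr hQ b)⁻¹ =
      (Ltr hQ a * (Ltr hQ e)⁻¹) * (Ltr hQ b * (Ltr hQ e)⁻¹)⁻¹ := by
  simp [mul_assoc]

lemma gen_comm (hQ : IsQuandle op) (hM : IsMedial op) (e : Q) :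
    ∀ f ∈ { f : Equiv.Perm Q | ∃ g ∈ translations op, ∃ h ∈ translations op, f = g * h⁻¹ },
    ∀ g ∈ { f : Equiv.Perm Q | ∃ g ∈ translations op, ∃ h ∈ translations op, f = g * h⁻¹ },
    Commute f g := by
  rintro f ⟨g1, hg1, h1, hh1, rfl⟩ g ⟨g2, hg2, h2, hh2, rfl⟩
  obtain ⟨a, rfl⟩ := eq_Ltr_of_mem (hQ := hQ) hg1
  obtain ⟨b, rfl⟩ := eq_Ltr_of_mem (hQ := hQ) hh1
  obtain ⟨c, rfl⟩ := eq_Ltr_of_mem (hQ := hQ) hg2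
  obtain ⟨d, rfl⟩ := eq_Ltr_of_mem (hQ := hQ) hh2
  rw [gen_decomp hQ e a b, gen_decomp hQ e c d]
  have C := base_comm hQ hM e
  exact (((C a c).mul_right (C a d).inv_right).mul_left
    (((C b c).mul_right (C b d).inv_right).inv_left))

lemma dis_comm (hQ : IsQuandle op) (hM : IsMedial op) (e : Q) :
    ∀ f ∈ Dis op, ∀ g ∈ Dis op, Commute f g := by
  have h1 : ∀ g ∈ { f : Equiv.Perm Q | ∃ g ∈ translations op, ∃ h ∈ translations op, f = g * h⁻¹ },
      ∀ f ∈ Dis op, Commute f g := by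
    intro g hg f hf
    induction hf using Subgroup.closure_induction with
    | mem x hx => exact gen_comm hQ hM e x hx g hg
    | one => exact Commute.one_left g
    | mul x y _ _ hx hy => exact hx.mul_left hy
    | inv x _ hx => exact hx.inv_left
  intro f hf g hg
  induction hg using Subgroup.closure_induction with
  | mem x hx => exact h1 x hx f hf
  | one => exact Commute.one_right f
  | mul x y _ _ hx hy => exact hx.mul_right hy
  | inv x _ hx => exact hx.inv_right

lemma dis_aut (hQ : IsQuandle op) :
    ∀ f ∈ Dis op, ∀ x y : Q, f (op x y) = op (f x) (f y) := by
  have tr_aut : ∀ g ∈ translations op, ∀ x y : Q, g (op x y) = op (g x) (g y) := by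
    rintro g ⟨a, ha⟩ x y
    rw [ha, ha, ha, hQ.2.1]
  have inv_aut : ∀ (g : Equiv.Perm Q), (∀ x y : Q, g (op x y) = op (g x) (g y)) →
      ∀ x y : Q, g⁻¹ (op x y) = op (g⁻¹ x) (g⁻¹ y) := by
    intro g hg x y
    apply g.injective
    rw [hg, Equiv.Perm.apply_inv_self, Equiv.Perm.apply_inv_self, Equiv.Perm.apply_inv_self]
  intro f hf
  induction hf using Subgroup.closure_induction with
  | mem x hx =>
    obtain ⟨g, hg, h, hh, rfl⟩ := hx
    intro x y
    simp only [Equiv.Perm.mul_apply]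
    rw [inv_aut h (tr_aut h hh), tr_aut g hg]
  | one => intro x y; rfl
  | mul a b _ _ ha hb => intro x y; simp only [Equiv.Perm.mul_apply]; rw [hb, ha]
  | inv a _ ha => exact inv_aut a ha

lemma dis_conj (hQ : IsQuandle op) (e : Q) :
    ∀ f ∈ Dis op, Ltr hQ e * f * (Ltr hQ e)⁻¹ ∈ Dis op := by
  intro f hf
  induction hf using Subgroup.closure_induction with
  | mem x hx =>
    obtain ⟨g, hg, h, hh, rfl⟩ := hx
    obtain ⟨a, rfl⟩ := eq_Ltr_of_mem (hQ := hQ) hg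
    obtain ⟨b, rfl⟩ := eq_Ltr_of_mem (hQ := hQ) hh
    have : Ltr hQ e * (Ltr hQ a * (Ltr hQ b)⁻¹) * (Ltr hQ e)⁻¹ =
        Ltr hQ (op e a) * (Ltr hQ (op e b))⁻¹ := by
      rw [Ltr_op, Ltr_op]; group
    rw [this]; exact mem_dis_gen hQ _ _
  | one => simpa using one_mem (Dis op)
  | mul a b _ _ ha hb =>
    have : Ltr hQ e * (a * b) * (Ltr hQ e)⁻¹ =
        (Ltr hQ e * a * (Ltr hQ e)⁻¹) * (Ltr hQ e * b * (Ltr hQ e)⁻¹) := by group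
    rw [this]; exact mul_mem ha hb
  | inv a _ ha =>
    have : Ltr hQ e * a⁻¹ * (Ltr hQ e)⁻¹ = (Ltr hQ e * a * (Ltr hQ e)⁻¹)⁻¹ := by group
    rw [this]; exact inv_mem ha

lemma Ltr_inv_conj (hQ : IsQuandle op) (e a : Q) :
    (Ltr hQ e)⁻¹ * Ltr hQ a * Ltr hQ e = Ltr hQ ((Ltr hQ e)⁻¹ a) := by
  have h := Ltr_op hQ e ((Ltr hQ e)⁻¹ a)
  rw [show op e ((Ltr hQ e)⁻¹ a) = a from by
    rw [← Ltr_apply hQ e]; exact Equiv.Perm.apply_inv_self _ _] at h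
  rw [h]; group

lemma dis_conj_inv (hQ : IsQuandle op) (e : Q) :
    ∀ f ∈ Dis op, (Ltr hQ e)⁻¹ * f * Ltr hQ e ∈ Dis op := by
  intro f hf
  induction hf using Subgroup.closure_induction with
  | mem x hx =>
    obtain ⟨g, hg, h, hh, rfl⟩ := hx
    obtain ⟨a, rfl⟩ := eq_Ltr_of_mem (hQ := hQ) hg
    obtain ⟨b, rfl⟩ := eq_Ltr_of_mem (hQ := hQ) hh
    have : (Ltr hQ e)⁻¹ * (Ltr hQ a * (Ltr hQ b)⁻¹) * Ltr hQ e =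
        ((Ltr hQ e)⁻¹ * Ltr hQ a * Ltr hQ e) * ((Ltr hQ e)⁻¹ * Ltr hQ b * Ltr hQ e)⁻¹ := by
      group
    rw [this, Ltr_inv_conj, Ltr_inv_conj]
    exact mem_dis_gen hQ _ _
  | one => simpa using one_mem (Dis op)
  | mul a b _ _ ha hb =>
    have : (Ltr hQ e)⁻¹ * (a * b) * Ltr hQ e =
        ((Ltr hQ e)⁻¹ * a * Ltr hQ e) * ((Ltr hQ e)⁻¹ * b * Ltr hQ e) := by group
    rw [this]; exact mul_mem ha hb
  | inv a _ ha =>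
    have : (Ltr hQ e)⁻¹ * a⁻¹ * Ltr hQ e = ((Ltr hQ e)⁻¹ * a * Ltr hQ e)⁻¹ := by group
    rw [this]; exact inv_mem ha

lemma Ltr_of_dis (hQ : IsQuandle op) {f : Equiv.Perm Q} (hf : f ∈ Dis op) (x : Q) :
    Ltr hQ (f x) = f * Ltr hQ x * f⁻¹ := by
  ext y
  simp only [Equiv.Perm.mul_apply, Ltr_apply]
  rw [dis_aut hQ f hf, Equiv.Perm.apply_inv_self]

@[simp] lemma Ltr_e_e (hQ : IsQuandle op) (e : Q) : Ltr hQ e e = e := hQ.1 e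

@[simp] lemma Ltr_e_inv_e (hQ : IsQuandle op) (e : Q) : (Ltr hQ e)⁻¹ e = e := by
  apply (Ltr hQ e).injective
  rw [Equiv.Perm.apply_inv_self, Ltr_e_e]


variable (op) in
noncomputable def rep {e : Q} (y : {y : Q // y ∈ disOrbit op e}) : Equiv.Perm Q :=
  y.2.choose

lemma rep_mem {e : Q} (y : {y : Q // y ∈ disOrbit op e}) : rep op y ∈ Dis op :=
  y.2.choose_spec.1

lemma rep_apply {e : Q} (y : {y : Q // y ∈ disOrbit op e}) : rep op y e = (y : Q) :=
  y.2.choose_spec.2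

variable (op) in
noncomputable def orbAdd {e : Q} (a b : {y : Q // y ∈ disOrbit op e}) :
    {y : Q // y ∈ disOrbit op e} :=
  ⟨(rep op a * rep op b) e, ⟨_, mul_mem (rep_mem a) (rep_mem b), rfl⟩⟩

variable (op) in
noncomputable def orbZero (e : Q) : {y : Q // y ∈ disOrbit op e} :=
  ⟨e, ⟨1, one_mem _, rfl⟩⟩

variable (op) in
noncomputable def orbNeg {e : Q} (a : {y : Q // y ∈ disOrbit op e}) :
    {y : Q // y ∈ disOrbit op e} :=
  ⟨(rep op a)⁻¹ e, ⟨_, inv_mem (rep_mem a), rfl⟩⟩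

lemma key (hQ : IsQuandle op) (hM : IsMedial op) (e : Q)
    (α α' β : Equiv.Perm Q) (hα : α ∈ Dis op) (hα' : α' ∈ Dis op) (hβ : β ∈ Dis op)
    (h : α e = α' e) : (α * β) e = (α' * β) e := by
  have C := dis_comm hQ hM e
  calc (α * β) e = β (α e) := by rw [(C α hα β hβ).eq]; rfl
    _ = β (α' e) := by rw [h]
    _ = (α' * β) e := by rw [(C α' hα' β hβ).eq]; rfl

/-- Value of a sum, given representatives. -/
lemma orbAdd_val (hQ : IsQuandle op) (hM : IsMedial op) {e : Q}
    {α β : Equiv.Perm Q} (hα : α ∈ Dis op) (hβ : β ∈ Dis op)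
    (a b : {y : Q // y ∈ disOrbit op e}) (ha : (a : Q) = α e) (hb : (b : Q) = β e) :
    (orbAdd op a b : Q) = (α * β) e := by
  show (rep op a * rep op b) e = _
  rw [key hQ hM e _ _ _ (rep_mem a) hα (rep_mem b) ((rep_apply a).trans ha)]
  show α (rep op b e) = (α * β) e
  rw [rep_apply, hb]
  rfl

lemma orbNeg_val (hQ : IsQuandle op) (hM : IsMedial op) {e : Q}
    {α : Equiv.Perm Q} (hα : α ∈ Dis op)
    (a : {y : Q // y ∈ disOrbit op e}) (ha : (a : Q) = α e) :
    (orbNeg op a : Q) = α⁻¹ e := by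
  show (rep op a)⁻¹ e = α⁻¹ e
  apply α.injective
  have h1 : (α * (rep op a)⁻¹) e = ((rep op a)⁻¹ * α) e :=
    congrFun (congrArg _ (dis_comm hQ hM e α hα _ (inv_mem (rep_mem a))).eq) e
  calc α ((rep op a)⁻¹ e) = ((rep op a)⁻¹ * α) e := h1
    _ = (rep op a)⁻¹ (α e) := rfl
    _ = (rep op a)⁻¹ (rep op a e) := by rw [rep_apply, ha]
    _ = e := Equiv.Perm.inv_apply_self (rep op a) e
    _ = α (α⁻¹ e) := (Equiv.Perm.apply_inv_self α e).symm

variable (op) in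
noncomputable def orbGroup (hQ : IsQuandle op) (hM : IsMedial op) (e : Q) :
    AddCommGroup {y : Q // y ∈ disOrbit op e} :=
  letI : Zero {y : Q // y ∈ disOrbit op e} := ⟨orbZero op e⟩
  letI : Add {y : Q // y ∈ disOrbit op e} := ⟨orbAdd op⟩
  letI : Neg {y : Q // y ∈ disOrbit op e} := ⟨orbNeg op⟩
  {
  add := orbAdd op,
  zero := orbZero op e,
  neg := orbNeg op,
  nsmul := nsmulRec,
  zsmul := zsmulRec,
  add_assoc := fun a b c => by
    apply Subtype.ext
    show (orbAdd op (orbAdd op a b) c : Q) = (orbAdd op a (orbAdd op b c) : Q)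
    rw [orbAdd_val hQ hM (mul_mem (rep_mem a) (rep_mem b)) (rep_mem c) _ c rfl
      (rep_apply c).symm]
    rw [orbAdd_val hQ hM (rep_mem a) (mul_mem (rep_mem b) (rep_mem c)) a _
      (rep_apply a).symm rfl]
    rw [mul_assoc],
  zero_add := fun a => by
    apply Subtype.ext
    show (orbAdd op (orbZero op e) a : Q) = (a : Q)
    rw [orbAdd_val hQ hM (one_mem _) (rep_mem a) _ a rfl (rep_apply a).symm]
    rw [one_mul, rep_apply],
  add_zero := fun a => by
    apply Subtype.ext
    show (orbAdd op a (orbZero op e) : Q) = (a : Q)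
    rw [orbAdd_val hQ hM (rep_mem a) (one_mem _) a _ (rep_apply a).symm rfl]
    rw [mul_one, rep_apply],
  neg_add_cancel := fun a => by
    apply Subtype.ext
    show (orbAdd op (orbNeg op a) a : Q) = (orbZero op e : Q)
    rw [orbAdd_val hQ hM (inv_mem (rep_mem a)) (rep_mem a) _ a rfl (rep_apply a).symm]
    rw [inv_mul_cancel]
    rfl,
  add_comm := fun a b => by
    apply Subtype.ext
    show (orbAdd op a b : Q) = (orbAdd op b a : Q)
    rw [orbAdd_val hQ hM (rep_mem a) (rep_mem b) a b (rep_apply a).symm (rep_apply b).symm,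
      orbAdd_val hQ hM (rep_mem b) (rep_mem a) b a (rep_apply b).symm (rep_apply a).symm,
      (dis_comm hQ hM e _ (rep_mem a) _ (rep_mem b)).eq]
  }

@[simp] lemma Ltr_inv_op (hQ : IsQuandle op) (e x : Q) : (Ltr hQ e)⁻¹ (op e x) = x := by
  rw [← Ltr_apply hQ e x]; exact Equiv.Perm.inv_apply_self (Ltr hQ e) x

@[simp] lemma Ltr_op_inv (hQ : IsQuandle op) (e x : Q) : op e ((Ltr hQ e)⁻¹ x) = x := by
  rw [← Ltr_apply hQ e]; exact Equiv.Perm.apply_inv_self (Ltr hQ e) x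

lemma conj_val (hQ : IsQuandle op) {e : Q} (a : {y : Q // y ∈ disOrbit op e}) :
    Ltr hQ e ((a : Q)) = (Ltr hQ e * rep op a * (Ltr hQ e)⁻¹) e := by
  simp [Equiv.Perm.mul_apply, rep_apply]

lemma conj_inv_val (hQ : IsQuandle op) {e : Q} (a : {y : Q // y ∈ disOrbit op e}) :
    (Ltr hQ e)⁻¹ ((a : Q)) = ((Ltr hQ e)⁻¹ * rep op a * Ltr hQ e) e := by
  simp [Equiv.Perm.mul_apply, rep_apply, hQ.1 e]

/-- The affine formula on values. -/
lemma affine_val (hQ : IsQuandle op) (hM : IsMedial op) {e : Q}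
    (a b c d : {y : Q // y ∈ disOrbit op e})
    (hc : (c : Q) = op e (a : Q)) (hd : (d : Q) = op e (b : Q)) :
    op (a : Q) (b : Q) = (orbAdd op (orbAdd op a (orbNeg op c)) d : Q) := by
  have hc' : (c : Q) = (Ltr hQ e * rep op a * (Ltr hQ e)⁻¹) e := by
    rw [hc, ← Ltr_apply hQ e ((a : Q)), conj_val hQ a]
  have hd' : (d : Q) = (Ltr hQ e * rep op b * (Ltr hQ e)⁻¹) e := by
    rw [hd, ← Ltr_apply hQ e ((b : Q)), conj_val hQ b]
  have hneg : (orbNeg op c : Q) = (Ltr hQ e * rep op a * (Ltr hQ e)⁻¹)⁻¹ e :=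
    orbNeg_val hQ hM (dis_conj hQ e _ (rep_mem a)) c hc'
  have hadd1 : (orbAdd op a (orbNeg op c) : Q) =
      (rep op a * (Ltr hQ e * rep op a * (Ltr hQ e)⁻¹)⁻¹) e :=
    orbAdd_val hQ hM (rep_mem a) (inv_mem (dis_conj hQ e _ (rep_mem a))) _ _
      (rep_apply a).symm hneg
  have hadd2 : (orbAdd op (orbAdd op a (orbNeg op c)) d : Q) =
      ((rep op a * (Ltr hQ e * rep op a * (Ltr hQ e)⁻¹)⁻¹) *
        (Ltr hQ e * rep op b * (Ltr hQ e)⁻¹)) e :=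
    orbAdd_val hQ hM
      (mul_mem (rep_mem a) (inv_mem (dis_conj hQ e _ (rep_mem a))))
      (dis_conj hQ e _ (rep_mem b)) _ _ hadd1 hd'
  rw [hadd2]
  have lhs : op (a : Q) (b : Q) = (rep op a * Ltr hQ e * (rep op a)⁻¹) ((b : Q)) := by
    conv_lhs => rw [← Ltr_apply hQ ((a : Q)) ((b : Q)),
      show (a : Q) = rep op a e from (rep_apply a).symm,
      Ltr_of_dis hQ (rep_mem a) e]
  rw [lhs]
  simp [Equiv.Perm.mul_apply, mul_inv_rev, rep_apply]

end OrbitAffine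

open OrbitAffine

/-- Proposition 3.3: for a medial quandle `Q` and `e ∈ Q`, the orbit `Qe` carries an
abelian group structure (the orbit group, with zero `e` and `α(e) + β(e) = (αβ)(e)`),
the left translation `L_e` restricts to a group automorphism of it, and the quandle
operation on the orbit is affine: `a · b = (a - L_e a) + L_e b`.
That is, `Qe = Aff(Ô(Q,e), L_e)`. -/
theorem orbit_is_affine {Q : Type*} (op : Q → Q → Q) (hQ : IsQuandle op)
    (hM : IsMedial op) (e : Q) :
    ∃ _inst : AddCommGroup {y : Q // y ∈ disOrbit op e},
      (((0 : {y : Q // y ∈ disOrbit op e}) : Q) = e) ∧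
      (∀ (α β : Equiv.Perm Q) (hα : α ∈ Dis op) (hβ : β ∈ Dis op),
        (⟨α e, ⟨α, hα, rfl⟩⟩ : {y : Q // y ∈ disOrbit op e}) +
          (⟨β e, ⟨β, hβ, rfl⟩⟩ : {y : Q // y ∈ disOrbit op e}) =
          (⟨(α * β) e, ⟨α * β, mul_mem hα hβ, rfl⟩⟩ : {y : Q // y ∈ disOrbit op e})) ∧
      ∃ Le : {y : Q // y ∈ disOrbit op e} ≃+ {y : Q // y ∈ disOrbit op e},
        (∀ a : {y : Q // y ∈ disOrbit op e}, ((Le a : Q)) = op e (a : Q)) ∧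
        (∀ a b : {y : Q // y ∈ disOrbit op e},
          op (a : Q) (b : Q) = ((a - Le a + Le b : {y : Q // y ∈ disOrbit op e}) : Q)) := by
  letI inst := orbGroup op hQ hM e
  refine ⟨inst, rfl, ?_, ?_⟩
  · intro α β hα hβ
    apply Subtype.ext
    exact orbAdd_val hQ hM hα hβ _ _ rfl rfl
  · refine ⟨{
      toFun := fun a => ⟨Ltr hQ e (a : Q),
        ⟨Ltr hQ e * rep op a * (Ltr hQ e)⁻¹, dis_conj hQ e _ (rep_mem a),
          (conj_val hQ a).symm⟩⟩,
      invFun := fun a => ⟨(Ltr hQ e)⁻¹ (a : Q),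
        ⟨(Ltr hQ e)⁻¹ * rep op a * Ltr hQ e, dis_conj_inv hQ e _ (rep_mem a),
          (conj_inv_val hQ a).symm⟩⟩,
      left_inv := fun a => Subtype.ext (Equiv.Perm.inv_apply_self (Ltr hQ e) ((a : Q))),
      right_inv := fun a => Subtype.ext (Equiv.Perm.apply_inv_self (Ltr hQ e) ((a : Q))),
      map_add' := fun a b => by
        apply Subtype.ext
        have h2 := orbAdd_val hQ hM (dis_conj hQ e _ (rep_mem a))
          (dis_conj hQ e _ (rep_mem b))
          (⟨Ltr hQ e ((a : Q)),
            ⟨Ltr hQ e * rep op a * (Ltr hQ e)⁻¹, dis_conj hQ e _ (rep_mem a),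
              (conj_val hQ a).symm⟩⟩ : {y : Q // y ∈ disOrbit op e})
          (⟨Ltr hQ e ((b : Q)),
            ⟨Ltr hQ e * rep op b * (Ltr hQ e)⁻¹, dis_conj hQ e _ (rep_mem b),
              (conj_val hQ b).symm⟩⟩ : {y : Q // y ∈ disOrbit op e})
          (conj_val hQ a) (conj_val hQ b)
        refine Eq.trans ?_ h2.symm
        show Ltr hQ e ((orbAdd op a b : Q)) = _
        show Ltr hQ e ((rep op a * rep op b) e) = _
        simp [Equiv.Perm.mul_apply] }, fun a => rfl, ?_⟩
    intro a b
    rw [sub_eq_add_neg]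
    exact affine_val hQ hM a b _ _ rfl rfl
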